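/- Let δ > 0, c > 0 and K ≥ 1, and let g : ℕ → ℝ be a nonnegative sequence satisfying, for every integer k ≥ 1, g(k) ≤ (1 + exp(-c·2^{k-1}·δ))·K²·exp(c·2^k·δ)·g(k-1). Then there exists a constant C > 0 (depending only on g(0), c, δ and K) such that for every integer k ≥ 1, g(k) ≤ C·(2^k·δ)^{2·log₂ K}·exp(2c·2^k·δ). -/

import Mathlib

/-- Dyadic iteration for the second-moment bound: if a nonnegative sequence `g` satisfies
`g(k) ≤ (1 + e^{-c·2^{k-1}·δ})·K²·e^{c·2^k·δ}·g(k-1)` for all `k ≥ 1`, then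
`g(k) ≤ C·(2^k δ)^{2 log₂ K}·e^{2c·2^k δ}` for some constant `C > 0`. -/
theorem stmt_5 (δ c K : ℝ) (hδ : 0 < δ) (hc : 0 < c) (hK : 1 ≤ K)
    (g : ℕ → ℝ) (hg : ∀ k, 0 ≤ g k)
    (hrec : ∀ k : ℕ, 1 ≤ k →
      g k ≤ (1 + Real.exp (-c * 2 ^ (k - 1) * δ)) * K ^ 2 * Real.exp (c * 2 ^ k * δ) * g (k - 1)) :
    ∃ C : ℝ, 0 < C ∧ ∀ k : ℕ, 1 ≤ k →
      g k ≤ C * ((2 : ℝ) ^ k * δ) ^ (2 * Real.logb 2 K) * Real.exp (2 * c * 2 ^ k * δ) := by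
  have hK0 : (0:ℝ) < K := lt_of_lt_of_le one_pos hK
  set L := Real.logb 2 K with hLdef
  set r : ℝ := Real.exp (-(c*δ)) with hrdef
  have hr0 : (0:ℝ) < r := Real.exp_pos _
  have hr1 : r < 1 := by
    rw [hrdef, Real.exp_lt_one_iff]
    nlinarith
  set f : ℕ → ℝ := fun j =>
    (1 + Real.exp (-c * 2 ^ (j - 1) * δ)) * K ^ 2 * Real.exp (c * 2 ^ j * δ) with hfdef
  have hf0 : ∀ j, 0 ≤ f j := by
    intro j
    have h1 := (Real.exp_pos (-c * 2 ^ (j-1) * δ)).le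
    have h2 := (Real.exp_pos (c * 2 ^ j * δ)).le
    positivity
  -- Step 1: unfold the recursion
  have h1 : ∀ k, g k ≤ g 0 * ∏ j ∈ Finset.Icc 1 k, f j := by
    intro k
    induction k with
    | zero => simp
    | succ n ih =>
      have hrec' := hrec (n+1) (by omega)
      simp only [Nat.add_sub_cancel] at hrec'
      calc g (n+1) ≤ f (n+1) * g n := hrec'
        _ ≤ f (n+1) * (g 0 * ∏ j ∈ Finset.Icc 1 n, f j) :=
            mul_le_mul_of_nonneg_left ih (hf0 _)
        _ = g 0 * ∏ j ∈ Finset.Icc 1 (n+1), f j := by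
            rw [Finset.prod_Icc_succ_top (by omega)]
            ring
  -- geometric sum bound for the error factors
  have hgeom : ∀ k : ℕ, ∑ j ∈ Finset.Icc 1 k, r ^ j ≤ 1 / (1 - r) := by
    intro k
    have hsub : Finset.Icc 1 k ⊆ Finset.range (k+1) := by
      intro j hj
      simp only [Finset.mem_Icc] at hj
      simp [Finset.mem_range]; omega
    have h1 : ∑ j ∈ Finset.Icc 1 k, r ^ j ≤ ∑ j ∈ Finset.range (k+1), r ^ j :=
      Finset.sum_le_sum_of_subset_of_nonneg hsub (fun j _ _ => (pow_pos hr0 j).le)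
    have h2 : ∑ j ∈ Finset.range (k+1), r ^ j = (1 - r^(k+1)) / (1 - r) := by
      rw [geom_sum_eq (ne_of_lt hr1)]
      rw [div_eq_div_iff (by linarith) (by linarith)]
      ring
    have h3 : (1 - r^(k+1)) / (1 - r) ≤ 1 / (1 - r) := by
      gcongr
      nlinarith [pow_pos hr0 (k+1)]
    linarith [h1, h2.le, h3]
  -- bound on the error product
  have hprod : ∀ k : ℕ, ∏ j ∈ Finset.Icc 1 k, (1 + Real.exp (-c * 2 ^ (j - 1) * δ))
      ≤ Real.exp (1 / (1 - r)) := by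
    intro k
    have hstep : ∀ j ∈ Finset.Icc 1 k,
        (1 + Real.exp (-c * 2 ^ (j - 1) * δ)) ≤ Real.exp (r ^ j) := by
      intro j hj
      simp only [Finset.mem_Icc] at hj
      have hj1 : (j:ℝ) ≤ (2:ℝ) ^ (j-1) := by
        have : j ≤ 2 ^ (j-1) := by
          have := Nat.lt_two_pow_self (n := j-1)
          omega
        calc (j:ℝ) ≤ ((2^(j-1) : ℕ) : ℝ) := by exact_mod_cast this
          _ = (2:ℝ) ^ (j-1) := by push_cast; ring
      have hle : Real.exp (-c * 2 ^ (j - 1) * δ) ≤ r ^ j := by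
        rw [hrdef, ← Real.exp_nat_mul]
        apply Real.exp_le_exp.mpr
        nlinarith [mul_le_mul_of_nonneg_left hj1 (mul_pos hc hδ).le]
      calc (1 + Real.exp (-c * 2 ^ (j - 1) * δ)) ≤ 1 + r ^ j := by linarith
        _ ≤ Real.exp (r ^ j) := by
            have := Real.add_one_le_exp (r ^ j); linarith
    calc ∏ j ∈ Finset.Icc 1 k, (1 + Real.exp (-c * 2 ^ (j - 1) * δ))
        ≤ ∏ j ∈ Finset.Icc 1 k, Real.exp (r ^ j) := by
          apply Finset.prod_le_prod (fun j _ => ?_) hstep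
          positivity
      _ = Real.exp (∑ j ∈ Finset.Icc 1 k, r ^ j) := (Real.exp_sum _ _).symm
      _ ≤ Real.exp (1 / (1 - r)) := Real.exp_le_exp.mpr (hgeom k)
  -- sum of the exponents
  have hsum : ∀ k : ℕ, ∑ j ∈ Finset.Icc 1 k, (c * 2 ^ j * δ) ≤ 2 * c * 2 ^ k * δ := by
    intro k
    induction k with
    | zero => simp; positivity
    | succ n ih =>
      rw [Finset.sum_Icc_succ_top (by omega)]
      have h2 : (2:ℝ) ^ (n+1) = 2 * 2 ^ n := by ring
      rw [h2]
      nlinarith [pow_pos (by norm_num : (0:ℝ) < 2) n, mul_pos hc hδ]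
  -- identity K^(2k) = (2^k)^(2L)
  have hKpow : ∀ k : ℕ, K ^ (2 * k) = ((2:ℝ) ^ k) ^ (2 * L) := by
    intro k
    have hK2 : K = (2:ℝ) ^ L := (Real.rpow_logb (by norm_num) (by norm_num) hK0).symm
    rw [hK2, ← Real.rpow_natCast ((2:ℝ) ^ L) (2*k), ← Real.rpow_mul (by norm_num),
      ← Real.rpow_natCast (2:ℝ) k, ← Real.rpow_mul (by norm_num)]
    congr 1
    push_cast
    ring
  -- choose the constant
  refine ⟨(g 0 + 1) * Real.exp (1 / (1 - r)) / δ ^ (2 * L), ?_, ?_⟩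
  · have h0 := hg 0
    have hdp : (0:ℝ) < δ ^ (2 * L) := Real.rpow_pos_of_pos hδ _
    positivity
  intro k hk
  have hprodbound : ∏ j ∈ Finset.Icc 1 k, f j
      ≤ Real.exp (1 / (1 - r)) * K ^ (2 * k) * Real.exp (2 * c * 2 ^ k * δ) := by
    have hsplit : ∏ j ∈ Finset.Icc 1 k, f j
        = (∏ j ∈ Finset.Icc 1 k, (1 + Real.exp (-c * 2 ^ (j - 1) * δ)))
          * (∏ j ∈ Finset.Icc 1 k, K ^ 2)
          * (∏ j ∈ Finset.Icc 1 k, Real.exp (c * 2 ^ j * δ)) := by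
      rw [← Finset.prod_mul_distrib, ← Finset.prod_mul_distrib]
    rw [hsplit]
    have hKconst : (∏ j ∈ Finset.Icc 1 k, K ^ 2) = K ^ (2 * k) := by
      have hcard : k + 1 - 1 = k := by omega
      rw [Finset.prod_const, Nat.card_Icc, hcard, ← pow_mul]
    have hexp : (∏ j ∈ Finset.Icc 1 k, Real.exp (c * 2 ^ j * δ))
        ≤ Real.exp (2 * c * 2 ^ k * δ) := by
      rw [← Real.exp_sum]
      exact Real.exp_le_exp.mpr (hsum k)
    rw [hKconst]
    have h2 : 0 ≤ (∏ j ∈ Finset.Icc 1 k, (1 + Real.exp (-c * 2 ^ (j - 1) * δ))) := by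
      apply Finset.prod_nonneg
      intro j _
      have := (Real.exp_pos (-c * 2 ^ (j-1) * δ)).le
      positivity
    have h3 : (0:ℝ) ≤ K ^ (2*k) := by positivity
    have h4 := hprod k
    have h5 : (0:ℝ) < Real.exp (1/(1-r)) := Real.exp_pos _
    have h6 : (0:ℝ) ≤ ∏ j ∈ Finset.Icc 1 k, Real.exp (c * 2 ^ j * δ) :=
      Finset.prod_nonneg (fun j _ => (Real.exp_pos _).le)
    calc (∏ j ∈ Finset.Icc 1 k, (1 + Real.exp (-c * 2 ^ (j - 1) * δ))) * K ^ (2*k)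
          * (∏ j ∈ Finset.Icc 1 k, Real.exp (c * 2 ^ j * δ))
        ≤ Real.exp (1/(1-r)) * K ^ (2*k) * (∏ j ∈ Finset.Icc 1 k, Real.exp (c * 2 ^ j * δ)) := by
          apply mul_le_mul_of_nonneg_right (mul_le_mul_of_nonneg_right h4 h3) h6
      _ ≤ Real.exp (1/(1-r)) * K ^ (2*k) * Real.exp (2 * c * 2 ^ k * δ) := by
          apply mul_le_mul_of_nonneg_left hexp (by positivity)
  -- final assembly
  have hdp : (0:ℝ) < δ ^ (2 * L) := Real.rpow_pos_of_pos hδ _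
  have hrw : ((2:ℝ) ^ k * δ) ^ (2 * L) = ((2:ℝ) ^ k) ^ (2 * L) * δ ^ (2 * L) :=
    Real.mul_rpow (by positivity) hδ.le
  have h2kL : (0:ℝ) < ((2:ℝ) ^ k) ^ (2 * L) := Real.rpow_pos_of_pos (by positivity) _
  have key : g 0 * Real.exp (1/(1-r)) * K ^ (2*k)
      ≤ (g 0 + 1) * Real.exp (1 / (1 - r)) / δ ^ (2 * L) * ((2:ℝ) ^ k * δ) ^ (2 * L) := by
    have heq : (g 0 + 1) * Real.exp (1/(1-r)) / δ ^ (2*L) * (((2:ℝ)^k)^(2*L) * δ^(2*L))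
        = (g 0 + 1) * Real.exp (1/(1-r)) * ((2:ℝ)^k)^(2*L) := by
      field_simp
    rw [hrw, hKpow k, heq]
    nlinarith [Real.exp_pos (1/(1-r)), hg 0, h2kL]
  calc g k ≤ g 0 * ∏ j ∈ Finset.Icc 1 k, f j := h1 k
    _ ≤ g 0 * (Real.exp (1/(1-r)) * K ^ (2*k) * Real.exp (2 * c * 2 ^ k * δ)) :=
        mul_le_mul_of_nonneg_left hprodbound (hg 0)
    _ = g 0 * Real.exp (1/(1-r)) * K ^ (2*k) * Real.exp (2 * c * 2 ^ k * δ) := by ring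
    _ ≤ (g 0 + 1) * Real.exp (1 / (1 - r)) / δ ^ (2 * L) * ((2:ℝ) ^ k * δ) ^ (2 * L)
          * Real.exp (2 * c * 2 ^ k * δ) :=
        mul_le_mul_of_nonneg_right key (Real.exp_pos _).le
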